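/- Let b₀, b₁, b₂ ∈ ℂ with b₂ ≠ 0 and let λ₁, λ₂ be the roots of b₂·λ(λ+1)/(α₁(α₁+1)) − (b₁+2b₂)·λ/α₁ + (b₀+b₁+b₂) = 0, neither of which is a nonpositive integer. Then Σ_{n=0}^2 b_n ₚF_q(α₁+n, α₂,…,αₚ; γ; z) = (b₀+b₁+b₂)·ₚ₊₂F_{q+2}(α₁,…,αₚ, λ₁+1, λ₂+1; γ₁,…,γ_q, λ₁, λ₂; z). -/

import Mathlib

/-- Pochhammer symbol `(x)_k` (rising factorial). -/
noncomputable def ascp (x : ℂ) (k : ℕ) : ℂ := (ascPochhammer ℂ k).eval x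

/-- The generalized hypergeometric function `ₚF_q(a; b; z)` as a formal power series:
its `k`-th coefficient is `(a₁)_k ⋯ (aₚ)_k / ((b₁)_k ⋯ (b_q)_k k!)`. -/
noncomputable def pFq (a b : List ℂ) : PowerSeries ℂ :=
  PowerSeries.mk fun k =>
    (a.map fun x => ascp x k).prod / ((b.map fun x => ascp x k).prod * (Nat.factorial k : ℂ))

lemma ascp_succ_right (x : ℂ) (k : ℕ) : ascp x (k+1) = ascp x k * (x + k) := by
  simp [ascp, ascPochhammer_succ_right]

lemma ascp_succ_left (x : ℂ) (k : ℕ) : ascp x (k+1) = x * ascp (x+1) k := by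
  simp [ascp, ascPochhammer_succ_left, Polynomial.eval_comp]

lemma ascp_mul_shift (x : ℂ) (k : ℕ) : x * ascp (x+1) k = ascp x k * (x + k) := by
  rw [← ascp_succ_left, ascp_succ_right]

lemma ascp_ne_zero (x : ℂ) (hx : ∀ m : ℕ, x ≠ -(m : ℂ)) (k : ℕ) : ascp x k ≠ 0 := by
  induction k with
  | zero => simp [ascp]
  | succ k ih =>
    rw [ascp_succ_right]
    refine mul_ne_zero ih fun h => hx k (by linear_combination h)


set_option maxHeartbeats 1000000 in
/-- three-term contiguous combination as a single `ₚ₊₂F_{q+2}`, where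
`λ₁, λ₂` are the roots of `b₂ λ(λ+1)/(α₁(α₁+1)) − (b₁+2b₂) λ/α₁ + (b₀+b₁+b₂) = 0`. -/
theorem pFq_three_term_combination (α₁ : ℂ) (αs γs : List ℂ) (b₀ b₁ b₂ : ℂ) (hb₂ : b₂ ≠ 0)
    (hα : ∀ m : ℕ, α₁ ≠ -(m : ℂ)) (hα' : ∀ m : ℕ, α₁ + 1 ≠ -(m : ℂ))
    (hγ : ∀ γ ∈ γs, ∀ m : ℕ, γ ≠ -(m : ℂ)) (l₁ l₂ : ℂ)
    (hroots : ∀ l : ℂ,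
      b₂ * (l * (l + 1)) / (α₁ * (α₁ + 1)) - (b₁ + 2 * b₂) * l / α₁ + (b₀ + b₁ + b₂)
        = b₂ / (α₁ * (α₁ + 1)) * ((l - l₁) * (l - l₂)))
    (hl₁ : ∀ m : ℕ, l₁ ≠ -(m : ℂ)) (hl₂ : ∀ m : ℕ, l₂ ≠ -(m : ℂ)) :
    PowerSeries.C b₀ * pFq (α₁ :: αs) γs + PowerSeries.C b₁ * pFq ((α₁ + 1) :: αs) γs
        + PowerSeries.C b₂ * pFq ((α₁ + 2) :: αs) γs
      = PowerSeries.C (b₀ + b₁ + b₂)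
          * pFq ((α₁ :: αs) ++ [l₁ + 1, l₂ + 1]) (γs ++ [l₁, l₂]) := by
  have hα0 : α₁ ≠ 0 := fun h => hα 0 (by simp [h])
  have hα1 : α₁ + 1 ≠ 0 := fun h => hα' 0 (by simp [h])
  have hl₁0 : l₁ ≠ 0 := fun h => hl₁ 0 (by simp [h])
  have hl₂0 : l₂ ≠ 0 := fun h => hl₂ 0 (by simp [h])
  have h0' : (b₀ + b₁ + b₂) * (α₁ * (α₁ + 1)) = b₂ * (l₁ * l₂) := by
    have := hroots 0
    field_simp at this
    linear_combination this
  ext k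
  have hQ : (γs.map fun x => ascp x k).prod ≠ 0 := by
    rw [Ne, List.prod_eq_zero_iff]
    intro h
    obtain ⟨γ, hγm, hγ0⟩ := List.mem_map.mp h
    exact ascp_ne_zero γ (hγ γ hγm) k hγ0
  have hfac : (Nat.factorial k : ℂ) ≠ 0 := Nat.cast_ne_zero.mpr (Nat.factorial_ne_zero k)
  have hL₁ : ascp l₁ k ≠ 0 := ascp_ne_zero l₁ hl₁ k
  have hL₂ : ascp l₂ k ≠ 0 := ascp_ne_zero l₂ hl₂ k
  have hk' : b₂ * ((k:ℂ) * ((k:ℂ) - 1)) + (b₁ + 2*b₂) * k * (α₁+1) + (b₀+b₁+b₂) * (α₁ * (α₁+1))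
      = b₂ * (((k:ℂ) + l₁) * ((k:ℂ) + l₂)) := by
    have h := hroots (-(k:ℂ))
    field_simp at h
    refine mul_left_cancel₀ (mul_ne_zero (pow_ne_zero 2 hα0) hα1)
      (?_ : α₁^2 * (α₁+1) * _ = α₁^2 * (α₁+1) * _)
    linear_combination (α₁^2 * (α₁+1)) * h
  have e1 : ascp (α₁ + 1) k = ascp α₁ k * (α₁ + k) / α₁ := by
    rw [eq_div_iff hα0]; linear_combination ascp_mul_shift α₁ k
  have e2 : ascp (α₁ + 2) k = ascp α₁ k * (α₁ + k) * (α₁ + 1 + k) / (α₁ * (α₁ + 1)) := by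
    have h := ascp_mul_shift (α₁ + 1) k
    rw [show α₁ + 1 + 1 = α₁ + 2 by ring] at h
    rw [eq_div_iff (mul_ne_zero hα0 hα1)]
    linear_combination α₁ * h + (α₁ + 1 + (k:ℂ)) * ascp_mul_shift α₁ k
  have e3 : ascp (l₁ + 1) k = ascp l₁ k * (l₁ + k) / l₁ := by
    rw [eq_div_iff hl₁0]; linear_combination ascp_mul_shift l₁ k
  have e4 : ascp (l₂ + 1) k = ascp l₂ k * (l₂ + k) / l₂ := by
    rw [eq_div_iff hl₂0]; linear_combination ascp_mul_shift l₂ k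
  have crw : ∀ (b : ℂ) (f : PowerSeries ℂ),
      PowerSeries.coeff k (PowerSeries.C b * f) = b * PowerSeries.coeff k f :=
    fun b f => PowerSeries.coeff_C_mul k f b
  rw [map_add, map_add, crw, crw, crw, crw]
  simp only [pFq, PowerSeries.coeff_mk, List.map_cons,
    List.map_append, List.prod_cons, List.prod_append, List.map_nil, List.prod_nil, e1, e2, e3, e4]
  set A := ascp α₁ k
  set P := (αs.map fun x => ascp x k).prod
  set Q := (γs.map fun x => ascp x k).prod
  set L₁ := ascp l₁ k
  set L₂ := ascp l₂ k
  have eR : (b₀+b₁+b₂) * (A * P * (L₁ * (l₁ + (k:ℂ)) / l₁ * (L₂ * (l₂ + (k:ℂ)) / l₂ * 1)) / (Q * (L₁ * (L₂ * 1)) * (Nat.factorial k : ℂ)))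
      = (b₀+b₁+b₂) * ((l₁+(k:ℂ))*(l₂+(k:ℂ))/(l₁*l₂)) * (A*P/(Q*(Nat.factorial k : ℂ))) := by
    calc (b₀+b₁+b₂) * (A * P * (L₁ * (l₁+(k:ℂ)) / l₁ * (L₂ * (l₂+(k:ℂ)) / l₂ * 1)) / (Q * (L₁ * (L₂ * 1)) * (Nat.factorial k : ℂ)))
        = (b₀+b₁+b₂) * ((L₁ * L₂) * (A * P * ((l₁+(k:ℂ)) * (l₂+(k:ℂ)) / (l₁ * l₂)))
            / ((L₁ * L₂) * (Q * (Nat.factorial k : ℂ)))) := by ring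
      _ = (b₀+b₁+b₂) * ((A * P * ((l₁+(k:ℂ)) * (l₂+(k:ℂ)) / (l₁ * l₂))) / (Q * (Nat.factorial k : ℂ))) := by
            rw [mul_div_mul_left _ _ (mul_ne_zero hL₁ hL₂)]
      _ = (b₀+b₁+b₂) * ((l₁+(k:ℂ)) * (l₂+(k:ℂ)) / (l₁ * l₂)) * (A * P / (Q * (Nat.factorial k : ℂ))) := by ring
  rw [eR]
  have key : b₀ + b₁*((α₁+(k:ℂ))/α₁) + b₂*((α₁+(k:ℂ))*(α₁+1+(k:ℂ))/(α₁*(α₁+1)))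
      = (b₀+b₁+b₂)*((l₁+(k:ℂ))*(l₂+(k:ℂ))/(l₁*l₂)) := by
    field_simp
    linear_combination (l₁*l₂)*hk' - (((l₁+(k:ℂ))*(l₂+(k:ℂ))))*h0'
  linear_combination (A*P/(Q*(Nat.factorial k : ℂ))) * key
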